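/- Let G be a linearly ordered abelian group, and let p ≥ 2 be a natural number such that every element of G is divisible by p (i.e., for every g ∈ G there is h ∈ G with p·h = g). Let (C, D) be a cut of G, meaning C and D are nonempty, C ∪ D = G, and every element of C is less than every element of D. If the set {y - x : x ∈ C, y ∈ D} has an infimum m in G, then m = 0. -/

import Mathlib

theorem cut_inf_eq_zero {G : Type*} [AddCommGroup G] [LinearOrder G] [IsOrderedAddMonoid G]
    (p : ℕ) (hp : 2 ≤ p) (hdiv : Function.Surjective (fun h : G => p • h))
    (C D : Set G) (hC : C.Nonempty) (hD : D.Nonempty)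
    (hunion : C ∪ D = Set.univ)
    (hlt : ∀ x ∈ C, ∀ y ∈ D, x < y)
    (m : G) (hm : IsGLB {d : G | ∃ x ∈ C, ∃ y ∈ D, d = y - x} m) :
    m = 0 := by
  obtain ⟨hlb, hglb⟩ := hm
  have hm0 : 0 ≤ m := by
    apply hglb
    rintro d ⟨x, hx, y, hy, rfl⟩
    exact sub_nonneg.mpr (hlt x hx y hy).le
  rcases eq_or_lt_of_le hm0 with h | h
  · exact h.symm
  exfalso
  obtain ⟨t, ht⟩ := hdiv m
  simp only at ht
  have htpos : 0 < t := by
    by_contra hle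
    push_neg at hle
    have : p • t ≤ 0 := nsmul_nonpos hle p
    rw [ht] at this
    exact absurd this (not_le.mpr h)
  have htm : t < m := by
    have h2 : 2 • t ≤ p • t := nsmul_le_nsmul_left htpos.le hp
    rw [ht, two_nsmul] at h2
    calc t < t + t := lt_add_of_pos_left t htpos
    _ ≤ m := h2
  have hnotlb : (m + t) ∉ lowerBounds {d : G | ∃ x ∈ C, ∃ y ∈ D, d = y - x} := by
    intro hmem
    have := hglb hmem
    exact absurd this (not_le.mpr (lt_add_of_pos_right m htpos))
  rw [lowerBounds, Set.mem_setOf_eq] at hnotlb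
  push_neg at hnotlb
  obtain ⟨d, ⟨x, hx, y, hy, rfl⟩, hd⟩ := hnotlb
  have hmem : x + t ∈ C ∪ D := hunion ▸ Set.mem_univ _
  cases hmem with
  | inl hc =>
    have hle : m ≤ y - (x + t) := hlb ⟨x + t, hc, y, hy, rfl⟩
    have : y - (x + t) < m := by
      rw [sub_add_eq_sub_sub]
      exact sub_lt_iff_lt_add.mpr hd
    exact absurd hle (not_le.mpr this)
  | inr hdd =>
    have hle : m ≤ (x + t) - x := hlb ⟨x, hx, x + t, hdd, rfl⟩
    simp at hle
    exact absurd hle (not_le.mpr htm)
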